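/- Let U_v, U_u ⊆ ℂ be open, let K_v ⊆ U_v be compact, let v be injective and holomorphic on U_v with nowhere-vanishing derivative, set K_u = v(K_v) and assume K_u ⊆ U_u, and let u be holomorphic on U_u with nowhere-vanishing derivative. Let W ⊆ ℂ be open with K_u ⊆ W, and let s be holomorphic on W with s(W) ⊆ U_v, v(s(w)) = w for all w ∈ W, and s(K_u) = K_v. Then E(K_v, u∘v) = E(K_u, u) + E(K_v, v) − 2 Re ∫_{K_u} (u''(w)/u'(w)) · conj(s''(w)/s'(w)) d²w. -/

import Mathlib

open MeasureTheory Complex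

/-- The energy functional `E(K, w) = ∫_K |w''(z)/w'(z)|² d²z`. -/
noncomputable def energy (K : Set ℂ) (w : ℂ → ℂ) : ℝ :=
  ∫ z in K, ‖deriv (deriv w) z / deriv w z‖ ^ 2

lemma norm_add_sq_complex (a b : ℂ) :
    ‖a + b‖ ^ 2 = ‖a‖ ^ 2 + ‖b‖ ^ 2 + 2 * (a * (starRingEnd ℂ) b).re := by
  simp only [Complex.sq_norm, Complex.normSq_apply, Complex.add_re,
    Complex.add_im, Complex.mul_re, Complex.conj_re, Complex.conj_im]
  ring

lemma det_restrictScalars_csmul (c : ℂ) :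
    ((c • (1 : ℂ →L[ℂ] ℂ)).restrictScalars ℝ).det = Complex.normSq c := by
  have h : (((c • (1 : ℂ →L[ℂ] ℂ)).restrictScalars ℝ : ℂ →L[ℝ] ℂ) : ℂ →ₗ[ℝ] ℂ)
      = Algebra.lmul ℝ ℂ c := by
    apply LinearMap.ext
    intro z
    simp [smul_eq_mul]
  rw [ContinuousLinearMap.det, h, ← Algebra.norm_apply, Algebra.norm_complex_apply]

lemma cov_complex {U : Set ℂ} (hU : IsOpen U) {K : Set ℂ} (hK : MeasurableSet K) (hKU : K ⊆ U)
    {f : ℂ → ℂ} (hf : DifferentiableOn ℂ f U) (hinj : Set.InjOn f K)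
    {F : Type*} [NormedAddCommGroup F] [NormedSpace ℝ F] (g : ℂ → F) :
    ∫ x in f '' K, g x = ∫ x in K, Complex.normSq (deriv f x) • g (f x) := by
  have h := integral_image_eq_integral_abs_det_fderiv_smul volume hK
    (f' := fun x => ((deriv f x) • (1 : ℂ →L[ℂ] ℂ)).restrictScalars ℝ)
    (fun x hx => by
      have hd := (hf.differentiableAt (hU.mem_nhds (hKU hx))).hasDerivAt
      have h2 : ContinuousLinearMap.toSpanSingleton ℂ (deriv f x)
          = (deriv f x) • (1 : ℂ →L[ℂ] ℂ) := by
        ext1; simp [mul_comm]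
      have := (hd.hasFDerivAt).restrictScalars ℝ
      rw [h2] at this
      exact this.hasFDerivWithinAt) hinj g
  rw [h]
  refine setIntegral_congr_fun hK fun x _ => ?_
  rw [det_restrictScalars_csmul, _root_.abs_of_nonneg (Complex.normSq_nonneg _)]

theorem energy_of_composition
    (Uv Uu : Set ℂ) (hUv : IsOpen Uv) (hUu : IsOpen Uu)
    (Kv : Set ℂ) (hKv : IsCompact Kv) (hKvUv : Kv ⊆ Uv)
    (v : ℂ → ℂ) (hv : DifferentiableOn ℂ v Uv) (hvinj : Set.InjOn v Uv)
    (hv' : ∀ z ∈ Uv, deriv v z ≠ 0)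
    (Ku : Set ℂ) (hKu : Ku = v '' Kv) (hKuUu : Ku ⊆ Uu)
    (u : ℂ → ℂ) (hu : DifferentiableOn ℂ u Uu) (hu' : ∀ z ∈ Uu, deriv u z ≠ 0)
    (W : Set ℂ) (hW : IsOpen W) (hKuW : Ku ⊆ W)
    (s : ℂ → ℂ) (hs : DifferentiableOn ℂ s W) (hsW : s '' W ⊆ Uv)
    (hvs : ∀ w ∈ W, v (s w) = w) (hsKu : s '' Ku = Kv) :
    energy Kv (u ∘ v) = energy Ku u + energy Kv v -
      2 * (∫ w in Ku, (deriv (deriv u) w / deriv u w) *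
        (starRingEnd ℂ) (deriv (deriv s) w / deriv s w)).re := by
  classical
  set F : ℂ → ℂ := fun w => deriv (deriv u) w / deriv u w with hF
  set B : ℂ → ℂ := fun z => deriv (deriv v) z / deriv v z with hB
  set G : ℂ → ℂ := fun w => deriv (deriv s) w / deriv s w with hG
  set A : ℂ → ℂ := fun z => F (v z) * deriv v z with hA
  have hKvM : MeasurableSet Kv := hKv.measurableSet
  -- membership facts
  have hmemKu : ∀ z ∈ Kv, v z ∈ Ku := fun z hz => hKu ▸ Set.mem_image_of_mem v hz
  -- the open set V
  have hVopen : IsOpen (Uv ∩ v ⁻¹' Uu) := hv.continuousOn.isOpen_inter_preimage hUv hUu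
  set V : Set ℂ := Uv ∩ v ⁻¹' Uu with hVdef
  have hKvV : Kv ⊆ V := fun z hz => ⟨hKvUv hz, hKuUu (hmemKu z hz)⟩
  -- analyticity and differentiability
  have hva : AnalyticOnNhd ℂ v Uv := hv.analyticOnNhd hUv
  have hua : AnalyticOnNhd ℂ u Uu := hu.analyticOnNhd hUu
  have hsa : AnalyticOnNhd ℂ s W := hs.analyticOnNhd hW
  have dv1 : ∀ z ∈ Uv, DifferentiableAt ℂ v z := fun z hz =>
    hv.differentiableAt (hUv.mem_nhds hz)
  have dv2 : ∀ z ∈ Uv, DifferentiableAt ℂ (deriv v) z := fun z hz =>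
    (hva.deriv z hz).differentiableAt
  have du1 : ∀ z ∈ Uu, DifferentiableAt ℂ u z := fun z hz =>
    hu.differentiableAt (hUu.mem_nhds hz)
  have du2 : ∀ z ∈ Uu, DifferentiableAt ℂ (deriv u) z := fun z hz =>
    (hua.deriv z hz).differentiableAt
  have ds1 : ∀ w ∈ W, DifferentiableAt ℂ s w := fun w hw =>
    hs.differentiableAt (hW.mem_nhds hw)
  have ds2 : ∀ w ∈ W, DifferentiableAt ℂ (deriv s) w := fun w hw =>
    (hsa.deriv w hw).differentiableAt
  -- chain rule on V
  have hEd : Set.EqOn (deriv (u ∘ v)) (fun y => deriv u (v y) * deriv v y) V := by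
    intro y hy
    exact deriv_comp y (du1 _ hy.2) (dv1 _ hy.1)
  have step1 : ∀ z ∈ V, deriv (deriv (u ∘ v)) z
      = deriv (deriv u) (v z) * deriv v z * deriv v z + deriv u (v z) * deriv (deriv v) z := by
    intro z hz
    have hEv : deriv (u ∘ v) =ᶠ[nhds z] fun y => deriv u (v y) * deriv v y :=
      hEd.eventuallyEq_of_mem (hVopen.mem_nhds hz)
    rw [hEv.deriv_eq]
    have hcd : DifferentiableAt ℂ (fun y => deriv u (v y)) z :=
      (du2 _ hz.2).comp z (dv1 _ hz.1)
    rw [deriv_fun_mul hcd (dv2 _ hz.1)]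
    have : deriv (fun y => deriv u (v y)) z = deriv (deriv u) (v z) * deriv v z :=
      deriv_comp z (du2 _ hz.2) (dv1 _ hz.1)
    rw [this]
  have step1' : ∀ z ∈ Kv, deriv (deriv (u ∘ v)) z / deriv (u ∘ v) z = A z + B z := by
    intro z hz
    have hzV := hKvV hz
    have ha : deriv u (v z) ≠ 0 := hu' _ (hKuUu (hmemKu z hz))
    have hb : deriv v z ≠ 0 := hv' _ (hKvUv hz)
    rw [step1 z hzV, hEd hzV]
    simp only [hA, hF, hB]
    field_simp
  -- inverse function derivative identities
  have hds1 : ∀ w ∈ W, deriv v (s w) * deriv s w = 1 := by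
    intro w hw
    have hsUv : s w ∈ Uv := hsW ⟨w, hw, rfl⟩
    have h1 : Set.EqOn (v ∘ s) id W := fun y hy => hvs y hy
    have h2 : deriv (v ∘ s) w = 1 := by
      rw [(h1.eventuallyEq_of_mem (hW.mem_nhds hw)).deriv_eq, deriv_id]
    rw [← h2, deriv_comp w (dv1 _ hsUv) (ds1 _ hw)]
  have hds2 : ∀ w ∈ W, deriv (deriv v) (s w) * deriv s w * deriv s w
      + deriv v (s w) * deriv (deriv s) w = 0 := by
    intro w hw
    have hsUv : s w ∈ Uv := hsW ⟨w, hw, rfl⟩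
    have h1 : Set.EqOn (fun y => deriv v (s y) * deriv s y) (fun _ => (1 : ℂ)) W :=
      fun y hy => hds1 y hy
    have h2 : deriv (fun y => deriv v (s y) * deriv s y) w = 0 := by
      rw [(h1.eventuallyEq_of_mem (hW.mem_nhds hw)).deriv_eq, deriv_const]
    have hcd : DifferentiableAt ℂ (fun y => deriv v (s y)) w :=
      (dv2 _ hsUv).comp w (ds1 _ hw)
    rw [deriv_fun_mul hcd (ds2 _ hw)] at h2
    have h3 : deriv (fun y => deriv v (s y)) w = deriv (deriv v) (s w) * deriv s w :=
      deriv_comp w (dv2 _ hsUv) (ds1 _ hw)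
    rw [h3] at h2
    linear_combination h2
  -- key pointwise identity for the cross term
  have hGs : ∀ z ∈ Kv, Complex.normSq (deriv v z) • (F (v z) * (starRingEnd ℂ) (G (v z)))
      = -(A z * (starRingEnd ℂ) (B z)) := by
    intro z hz
    have hw : v z ∈ W := hKuW (hmemKu z hz)
    have hsvz : s (v z) = z := hvinj (hsW ⟨_, hw, rfl⟩) (hKvUv hz) (hvs _ hw)
    have h1 := hds1 _ hw
    have h2 := hds2 _ hw
    rw [hsvz] at h1 h2
    have hbz : deriv v z ≠ 0 := hv' z (hKvUv hz)
    have hsz : deriv s (v z) ≠ 0 := by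
      intro h; rw [h, mul_zero] at h1; exact zero_ne_one h1
    have hdds : deriv (deriv s) (v z)
        = -(deriv (deriv v) z * deriv s (v z) * deriv s (v z)) / deriv v z := by
      rw [eq_div_iff hbz]
      linear_combination h2
    have hGv : G (v z) = -(B z) * deriv s (v z) := by
      simp only [hG, hB]
      rw [hdds]
      field_simp
    have hc : (starRingEnd ℂ) (deriv v z) * (starRingEnd ℂ) (deriv s (v z)) = 1 := by
      rw [← map_mul, h1, map_one]
    rw [hGv]
    simp only [hA, Complex.real_smul]
    rw [← Complex.mul_conj]
    simp only [map_mul, map_neg]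
    linear_combination (-(deriv v z) * F (v z) * (starRingEnd ℂ) (B z)) * hc
  -- continuity facts
  have cF : ContinuousOn F Uu :=
    (hua.deriv.deriv.continuousOn).div hua.deriv.continuousOn hu'
  have cB : ContinuousOn B Uv :=
    (hva.deriv.deriv.continuousOn).div hva.deriv.continuousOn hv'
  have cA : ContinuousOn A V := by
    apply ContinuousOn.mul
    · exact cF.comp ((hv.continuousOn).mono (Set.inter_subset_left)) (fun z hz => hz.2)
    · exact hva.deriv.continuousOn.mono Set.inter_subset_left
  have cAK : ContinuousOn A Kv := cA.mono hKvV
  have cBK : ContinuousOn B Kv := cB.mono hKvUv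
  -- integrability facts
  have iA2 : IntegrableOn (fun z => ‖A z‖ ^ 2) Kv := by
    exact (cAK.norm.pow 2).integrableOn_compact hKv
  have iB2 : IntegrableOn (fun z => ‖B z‖ ^ 2) Kv := by
    exact (cBK.norm.pow 2).integrableOn_compact hKv
  have iAB : IntegrableOn (fun z => A z * (starRingEnd ℂ) (B z)) Kv := by
    exact (cAK.mul (Complex.continuous_conj.comp_continuousOn cBK)).integrableOn_compact hKv
  have iABre : IntegrableOn (fun z => (A z * (starRingEnd ℂ) (B z)).re) Kv := by
    exact (Complex.continuous_re.comp_continuousOn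
      (cAK.mul (Complex.continuous_conj.comp_continuousOn cBK))).integrableOn_compact hKv
  -- change of variables
  have hinjKv : Set.InjOn v Kv := hvinj.mono hKvUv
  have e1 : energy Ku u = ∫ z in Kv, ‖A z‖ ^ 2 := by
    have : energy Ku u = ∫ w in Ku, ‖F w‖ ^ 2 := rfl
    rw [this, hKu, cov_complex hUv hKvM hKvUv hv hinjKv]
    apply setIntegral_congr_fun hKvM
    intro z _
    simp only [hA, smul_eq_mul, norm_mul, mul_pow, Complex.normSq_eq_norm_sq]
    ring
  have e2 : (∫ w in Ku, F w * (starRingEnd ℂ) (G w))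
      = -∫ z in Kv, A z * (starRingEnd ℂ) (B z) := by
    rw [hKu, cov_complex hUv hKvM hKvUv hv hinjKv, ← integral_neg]
    apply setIntegral_congr_fun hKvM
    intro z hz
    exact hGs z hz
  -- expand the left-hand side
  have lhs1 : energy Kv (u ∘ v) = ∫ z in Kv, ‖A z + B z‖ ^ 2 := by
    apply setIntegral_congr_fun hKvM
    intro z hz
    show ‖deriv (deriv (u ∘ v)) z / deriv (u ∘ v) z‖ ^ 2 = ‖A z + B z‖ ^ 2
    rw [step1' z hz]
  have lhs2 : (∫ z in Kv, ‖A z + B z‖ ^ 2)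
      = (∫ z in Kv, ‖A z‖ ^ 2) + (∫ z in Kv, ‖B z‖ ^ 2)
        + 2 * (∫ z in Kv, A z * (starRingEnd ℂ) (B z)).re := by
    simp only [norm_add_sq_complex]
    have i12 : Integrable (fun z => ‖A z‖ ^ 2 + ‖B z‖ ^ 2) (volume.restrict Kv) :=
      iA2.add iB2
    have i3 : Integrable (fun z => 2 * (A z * (starRingEnd ℂ) (B z)).re)
        (volume.restrict Kv) := iABre.const_mul 2
    have iAo : Integrable (fun z => ‖A z‖ ^ 2) (volume.restrict Kv) := iA2
    have iBo : Integrable (fun z => ‖B z‖ ^ 2) (volume.restrict Kv) := iB2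
    rw [integral_add i12 i3, integral_add iAo iBo, integral_const_mul]
    congr 1
    exact congrArg (2 * ·) (integral_re iAB)
  have e3 : energy Kv v = ∫ z in Kv, ‖B z‖ ^ 2 := rfl
  rw [lhs1, lhs2, e1, e3, e2]
  simp only [Complex.neg_re]
  ring
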